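/- If x ∈ [0,1] is binary normal (i.e., D_0(x) = D_1(x) = 1/2), then L_a'(x) = 0 for every a ∈ (0,1) with a ≠ 1/2. -/

import Mathlib

open Topology Filter Set

/-- The de Rham functional equation characterizing Lebesgue's singular function `L_a`
on `[0,1]`, together with continuity. -/
def deRham (a : ℝ) (L : ℝ → ℝ) : Prop :=
  ContinuousOn L (Set.Icc 0 1) ∧
  (∀ x ∈ Set.Icc (0:ℝ) (1/2), L x = a * L (2*x)) ∧
  (∀ x ∈ Set.Icc (1/2:ℝ) 1, L x = (1-a) * L (2*x - 1) + a)

namespace DZAux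



variable (ε : ℕ → ℕ)

/-- numerator of the left endpoint of the level-`m` dyadic interval containing `x` -/
def kk : ℕ → ℕ
  | 0 => 0
  | m+1 => 2 * kk m + ε (m+1)

/-- binary tail after position `m` -/
noncomputable def tl (m : ℕ) : ℝ := ∑' j : ℕ, (ε (m+1+j) : ℝ) / 2 ^ (j+1)

/-- digit-one count -/
def s (m : ℕ) : ℕ := ∑ i ∈ Finset.range m, ε (i+1)

variable (a : ℝ)

noncomputable def W (m : ℕ) : ℝ := ∏ i ∈ Finset.range m, (if ε (i+1) = 1 then 1 - a else a)

lemma summable_half : Summable (fun j : ℕ => (1:ℝ) / 2 ^ (j+1)) := by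
  simpa [pow_succ, div_eq_mul_inv, mul_comm, mul_assoc] using
    (summable_geometric_two.mul_right (2⁻¹ : ℝ))

lemma tsum_half : ∑' j : ℕ, (1:ℝ) / 2 ^ (j+1) = 1 := by
  have h2 : (fun j : ℕ => (1:ℝ) / 2 ^ (j+1)) = fun n : ℕ => (1:ℝ) / 2 / 2 ^ n := by
    funext j; rw [pow_succ]; ring
  rw [h2]; exact tsum_geometric_two' 1

lemma summable_tl (hε : ∀ n, ε n ≤ 1) (m : ℕ) :
    Summable (fun j : ℕ => (ε (m+1+j) : ℝ) / 2 ^ (j+1)) := by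
  apply Summable.of_nonneg_of_le (fun j => by positivity) (fun j => ?_) (summable_half)
  gcongr
  exact_mod_cast hε _

lemma tl_nonneg (m : ℕ) : 0 ≤ tl ε m :=
  tsum_nonneg (fun j => by positivity)

lemma tl_le_one (hε : ∀ n, ε n ≤ 1) (m : ℕ) : tl ε m ≤ 1 := by
  have h := Summable.tsum_le_tsum (f := fun j : ℕ => (ε (m+1+j) : ℝ) / 2 ^ (j+1))
    (g := fun j : ℕ => (1:ℝ) / 2 ^ (j+1)) (fun j => by
      show (ε (m+1+j) : ℝ) / 2 ^ (j+1) ≤ 1 / 2 ^ (j+1)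
      gcongr
      exact_mod_cast hε _) (summable_tl ε hε m) summable_half
  rw [tsum_half] at h
  exact h

lemma tl_ge (hε : ∀ n, ε n ≤ 1) (m j : ℕ) (h : ε (m+1+j) = 1) :
    1 / 2 ^ (j+1) ≤ tl ε m := by
  have hle := Summable.le_tsum (summable_tl ε hε m) j (fun i _ => by positivity)
  rw [h] at hle
  simpa [tl] using hle

lemma tl_le (hε : ∀ n, ε n ≤ 1) (m j : ℕ) (h : ε (m+1+j) = 0) :
    tl ε m ≤ 1 - 1 / 2 ^ (j+1) := by
  have hcast : ∀ i, (ε (m+1+i) : ℝ) ≤ 1 := fun i => by exact_mod_cast hε _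
  have hsum2 : Summable (fun j : ℕ => (1 - (ε (m+1+j) : ℝ)) / 2 ^ (j+1)) := by
    apply Summable.of_nonneg_of_le (fun i => ?_) (fun i => ?_) (summable_half)
    · have h1 := hcast i
      have h2 : (0:ℝ) < 2 ^ (i+1) := by positivity
      exact div_nonneg (by linarith) h2.le
    · have h0 : (0:ℝ) ≤ (ε (m+1+i) : ℝ) := by positivity
      gcongr
      linarith
  have key : tl ε m + ∑' j : ℕ, (1 - (ε (m+1+j) : ℝ)) / 2 ^ (j+1) = 1 := by
    calc tl ε m + ∑' j : ℕ, (1 - (ε (m+1+j) : ℝ)) / 2 ^ (j+1)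
        = ∑' j : ℕ, ((ε (m+1+j) : ℝ) / 2 ^ (j+1) + (1 - (ε (m+1+j) : ℝ)) / 2 ^ (j+1)) :=
          (Summable.tsum_add (summable_tl ε hε m) hsum2).symm
      _ = ∑' j : ℕ, (1:ℝ) / 2 ^ (j+1) := by congr 1; funext i; ring
      _ = 1 := tsum_half
  have hterm : 1 / 2 ^ (j+1) ≤ ∑' j : ℕ, (1 - (ε (m+1+j) : ℝ)) / 2 ^ (j+1) := by
    have hle := Summable.le_tsum hsum2 j (fun i _ => by
      have h1 := hcast i
      have h2 : (0:ℝ) < 2 ^ (i+1) := by positivity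
      exact div_nonneg (by linarith) h2.le)
    rw [h] at hle
    simpa using hle
  linarith

lemma tl_rec (hε : ∀ n, ε n ≤ 1) (m : ℕ) :
    tl ε m = ((ε (m+1) : ℝ) + tl ε (m+1)) / 2 := by
  rw [tl, Summable.tsum_eq_zero_add (summable_tl ε hε m)]
  have h1 : ∑' j : ℕ, (ε (m+1+(j+1)) : ℝ) / 2 ^ (j+1+1) = tl ε (m+1) / 2 := by
    rw [tl, ← tsum_div_const]
    congr 1; funext j
    rw [show m+1+(j+1) = m+1+1+j by omega]
    ring
  rw [h1]
  norm_num
  ring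

lemma x_eq (hε : ∀ n, ε n ≤ 1) (x : ℝ) (hx : x = tl ε 0) :
    ∀ m, x = ((kk ε m : ℝ) + tl ε m) / 2 ^ m := by
  intro m
  induction m with
  | zero => simpa [kk] using hx
  | succ m ih =>
    rw [ih, tl_rec ε hε m]
    have hk : kk ε (m+1) = 2 * kk ε m + ε (m+1) := rfl
    rw [hk]
    push_cast
    ring

lemma hx_tl (x : ℝ) (hx : x = ∑' n : ℕ, (ε (n+1) : ℝ) / 2 ^ (n+1)) : x = tl ε 0 := by
  rw [hx, tl]
  congr 1; funext n
  rw [show 0+1+n = n+1 by omega]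

lemma s_le (hε : ∀ n, ε n ≤ 1) (m : ℕ) : s ε m ≤ m := by
  calc s ε m ≤ ∑ i ∈ Finset.range m, 1 := Finset.sum_le_sum (fun i _ => hε _)
  _ = m := by simp

lemma W_eq (hε : ∀ n, ε n ≤ 1) (m : ℕ) :
    W ε a m = a ^ (m - s ε m) * (1-a) ^ (s ε m) := by
  induction m with
  | zero => simp [W, s]
  | succ m ih =>
    rw [W, Finset.prod_range_succ, ← W, ih]
    have hsm := s_le ε hε m
    have he : ε (m+1) = 0 ∨ ε (m+1) = 1 := by have := hε (m+1); omega
    rcases he with he | he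
    · have h1 : s ε (m+1) = s ε m := by rw [s, Finset.sum_range_succ, ← s, he]; ring
      have h2 : m + 1 - s ε (m+1) = (m - s ε m) + 1 := by omega
      rw [h1] at h2
      rw [h1, h2, he]
      simp [pow_succ]
      ring
    · have h1 : s ε (m+1) = s ε m + 1 := by rw [s, Finset.sum_range_succ, ← s, he]
      have h2 : m + 1 - s ε (m+1) = m - s ε m := by omega
      rw [h1]
      rw [show m + 1 - (s ε m + 1) = m - s ε m from by omega, he]
      simp [pow_succ]
      ring



lemma L_zero (L : ℝ → ℝ) (ha1 : a < 1)
    (hF0 : ∀ y ∈ Set.Icc (0:ℝ) (1/2), L y = a * L (2*y)) : L 0 = 0 := by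
  have h := hF0 0 (by norm_num)
  have : (1 - a) * L 0 = 0 := by
    rw [mul_zero] at h
    linarith [h]
  have h1a : (1:ℝ) - a ≠ 0 := by linarith
  exact (mul_eq_zero.mp this).resolve_left h1a

lemma selfSimilar (hε : ∀ n, ε n ≤ 1) (L : ℝ → ℝ) (ha0 : 0 < a) (ha1 : a < 1)
    (hF0 : ∀ y ∈ Set.Icc (0:ℝ) (1/2), L y = a * L (2*y))
    (hF1 : ∀ y ∈ Set.Icc (1/2:ℝ) 1, L y = (1-a) * L (2*y - 1) + a) :
    ∀ m, ∀ u ∈ Set.Icc (0:ℝ) 1,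
      L (((kk ε m : ℝ) + u) / 2 ^ m) = L ((kk ε m : ℝ) / 2 ^ m) + W ε a m * L u := by
  have hL0 : L 0 = 0 := L_zero a L ha1 hF0
  intro m
  induction m with
  | zero =>
    intro u hu
    simp [kk, W, hL0]
  | succ m ih =>
    -- the generic step identity, for any u ∈ [0,1]
    have step : ∀ u ∈ Set.Icc (0:ℝ) 1,
        L (((kk ε (m+1) : ℝ) + u) / 2 ^ (m+1)) =
          L ((kk ε m : ℝ) / 2 ^ m) + W ε a m *
            (if ε (m+1) = 1 then (1-a) * L u + a else a * L u) := by
      intro u hu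
      obtain ⟨hu0, hu1⟩ := hu
      have he : ε (m+1) = 0 ∨ ε (m+1) = 1 := by have := hε (m+1); omega
      have harg : ((kk ε (m+1) : ℝ) + u) / 2 ^ (m+1)
          = ((kk ε m : ℝ) + ((ε (m+1) : ℝ) + u) / 2) / 2 ^ m := by
        have hk : kk ε (m+1) = 2 * kk ε m + ε (m+1) := rfl
        rw [hk]
        push_cast
        ring
      have hu' : ((ε (m+1) : ℝ) + u) / 2 ∈ Set.Icc (0:ℝ) 1 := by
        rcases he with he | he <;> rw [he] <;> constructor <;> norm_num <;> linarith
      rw [harg, ih _ hu']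
      congr 1
      rcases he with he | he
      · rw [he]
        simp only [Nat.cast_zero, zero_add, if_neg (by omega : ¬ ε (m+1) = 1)]
        have := hF0 (u/2) ⟨by linarith, by linarith⟩
        rw [show 2 * (u/2) = u by ring] at this
        rw [this]
        norm_num
      · rw [he]
        simp only [Nat.cast_one, if_pos he]
        have hmem : ((1:ℝ) + u) / 2 ∈ Set.Icc (1/2:ℝ) 1 := ⟨by linarith, by linarith⟩
        have := hF1 _ hmem
        rw [show 2 * ((1 + u)/2) - 1 = u by ring] at this
        rw [this]
        simp
    intro u hu
    have h0 := step 0 (by norm_num)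
    rw [add_zero, hL0] at h0
    have hW : W ε a (m+1) = W ε a m * (if ε (m+1) = 1 then 1 - a else a) :=
      Finset.prod_range_succ _ _
    rw [step u hu, h0, hW]
    rcases (by have := hε (m+1); omega : ε (m+1) = 0 ∨ ε (m+1) = 1) with he | he <;>
      simp [he] <;> ring



lemma s_succ (n : ℕ) : s ε (n+1) = s ε n + ε (n+1) := Finset.sum_range_succ _ _

lemma count_ones (m : ℕ) (j : ℕ) (hr : ∀ i < j, ε (m+2+i) = 1) :
    s ε (m+1) + j ≤ s ε (m+1+j) := by
  induction j with
  | zero => simp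
  | succ j ih =>
    have h1 : s ε (m+1+(j+1)) = s ε (m+1+j) + ε (m+1+j+1) := by
      rw [show m+1+(j+1) = (m+1+j)+1 by omega, s_succ]
    have h2 : ε (m+1+j+1) = 1 := by
      rw [show m+1+j+1 = m+2+j by omega]
      exact hr j (Nat.lt_succ_self j)
    have := ih (fun i hi => hr i (Nat.lt_succ_of_lt hi))
    omega

lemma count_zeros (m : ℕ) (j : ℕ) (hr : ∀ i < j, ε (m+2+i) = 0) :
    s ε (m+1+j) ≤ s ε (m+1) := by
  induction j with
  | zero => simp
  | succ j ih =>
    have h1 : s ε (m+1+(j+1)) = s ε (m+1+j) + ε (m+1+j+1) := by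
      rw [show m+1+(j+1) = (m+1+j)+1 by omega, s_succ]
    have h2 : ε (m+1+j+1) = 0 := by
      rw [show m+1+j+1 = m+2+j by omega]
      exact hr j (Nat.lt_succ_self j)
    have := ih (fun i hi => hr i (Nat.lt_succ_of_lt hi))
    omega

lemma tendsto_core (a : ℝ) (hε : ∀ n, ε n ≤ 1) (ha0 : 0 < a) (ha1 : a < 1) (hane : a ≠ 1/2)
    (hd : Tendsto (fun n : ℕ => (∑ k ∈ Finset.range n, (ε (k+1) : ℝ)) / n) atTop (𝓝 (1/2)))
    (j0 j1 : ℕ → ℕ)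
    (hr0 : ∀ m, ∀ i < j0 m, ε (m+2+i) = 1) (hr1 : ∀ m, ∀ i < j1 m, ε (m+2+i) = 0) :
    Tendsto (fun m : ℕ => a ^ (m - s ε m) * (1-a) ^ (s ε m) * 2 ^ m
      * 2 ^ (max (j0 m) (j1 m))) atTop (𝓝 0) := by
  -- abbreviations
  set A := 2*a with hAdef
  set B := 2*(1-a) with hBdef
  have hA : 0 < A := by positivity
  have hB : 0 < B := by simp [hBdef]; linarith
  have hABpos : 0 < A * B := by positivity
  have hAB : A * B < 1 := by
    have h1 : 2*a - 1 ≠ 0 := fun h => hane (by linarith)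
    have h2 : 0 < (2*a - 1)^2 := by positivity
    nlinarith
  set q := Real.sqrt (A*B) with hqdef
  have hq0 : 0 < q := Real.sqrt_pos.mpr hABpos
  have hq1 : q < 1 := by
    rw [hqdef, show (1:ℝ) = Real.sqrt 1 by simp]
    exact Real.sqrt_lt_sqrt hABpos.le hAB
  set ρ := (1+q)/2 with hρdef
  have hρq : q < ρ := by rw [hρdef]; linarith
  have hρ1 : ρ < 1 := by rw [hρdef]; linarith
  have hρ0 : 0 < ρ := by rw [hρdef]; linarith
  set Λ := |Real.log B - Real.log A| with hΛdef
  have hΛ : 0 ≤ Λ := abs_nonneg _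
  have hlog2 : 0 < Real.log 2 := Real.log_pos one_lt_two
  set D := Λ + 9 * Real.log 2 + 1 with hDdef
  have hD : 0 < D := by rw [hDdef]; linarith
  have hlogq : Real.log q < Real.log ρ := Real.log_lt_log hq0 hρq
  set δ := min (1/4 : ℝ) ((Real.log ρ - Real.log q)/D) with hδdef
  have hδpos : 0 < δ := by
    rw [hδdef]
    apply lt_min (by norm_num)
    exact div_pos (by linarith) hD
  have hδ14 : δ ≤ 1/4 := min_le_left _ _
  have hδD : δ * D ≤ Real.log ρ - Real.log q := by
    have := min_le_right (1/4 : ℝ) ((Real.log ρ - Real.log q)/D)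
    rw [← hδdef] at this
    calc δ * D ≤ ((Real.log ρ - Real.log q)/D) * D := by
          exact mul_le_mul_of_nonneg_right this hD.le
      _ = Real.log ρ - Real.log q := by field_simp
  -- normality: deviation bound
  have hS : ∃ N1 : ℕ, ∀ n ≥ N1, |(s ε n : ℝ) - n/2| ≤ δ * n := by
    obtain ⟨N0, hN0⟩ := Metric.tendsto_atTop.mp hd δ hδpos
    refine ⟨N0 + 1, fun n hn => ?_⟩
    have hn0 : 0 < n := by omega
    have hnR : (0:ℝ) < n := by exact_mod_cast hn0
    have h := hN0 n (by omega)
    rw [Real.dist_eq] at h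
    have hcast : (s ε n : ℝ) = ∑ k ∈ Finset.range n, (ε (k+1) : ℝ) := by
      rw [s]; push_cast; rfl
    have key : (s ε n : ℝ) - n/2 = ((∑ k ∈ Finset.range n, (ε (k+1) : ℝ))/n - 1/2) * n := by
      rw [hcast]; field_simp
    rw [key, abs_mul, abs_of_pos hnR]
    exact mul_le_mul_of_nonneg_right h.le hnR.le
  obtain ⟨N1, hN1⟩ := hS
  -- run-length bounds
  have hj0b : ∀ m, N1 ≤ m + 1 → (j0 m : ℝ) ≤ 8*δ*(m+1) := by
    intro m hm
    set j := j0 m with hjdef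
    have hc : (s ε (m+1) : ℝ) + j ≤ s ε (m+1+j) := by
      exact_mod_cast count_ones ε m j (hr0 m)
    have h1 := hN1 (m+1) hm
    have h2 := hN1 (m+1+j) (by omega)
    have e1 : (s ε (m+1) : ℝ) ≥ ((m:ℝ)+1)/2 - δ*((m:ℝ)+1) := by
      have := abs_le.mp h1
      push_cast at this ⊢
      linarith [this.1]
    have e2 : (s ε (m+1+j) : ℝ) ≤ ((m:ℝ)+1+j)/2 + δ*((m:ℝ)+1+j) := by
      have := abs_le.mp h2
      push_cast at this ⊢
      linarith [this.2]
    have hj0' : (0:ℝ) ≤ (j:ℝ) := by positivity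
    have hδj : δ * j ≤ (1/4) * j := mul_le_mul_of_nonneg_right hδ14 hj0'
    linarith
  have hj1b : ∀ m, N1 ≤ m + 1 → (j1 m : ℝ) ≤ 8*δ*(m+1) := by
    intro m hm
    set j := j1 m with hjdef
    have hc : (s ε (m+1+j) : ℝ) ≤ s ε (m+1) := by
      exact_mod_cast count_zeros ε m j (hr1 m)
    have h1 := hN1 (m+1) hm
    have h2 := hN1 (m+1+j) (by omega)
    have e1 : (s ε (m+1) : ℝ) ≤ ((m:ℝ)+1)/2 + δ*((m:ℝ)+1) := by
      have := abs_le.mp h1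
      push_cast at this ⊢
      linarith [this.2]
    have e2 : (s ε (m+1+j) : ℝ) ≥ ((m:ℝ)+1+j)/2 - δ*((m:ℝ)+1+j) := by
      have := abs_le.mp h2
      push_cast at this ⊢
      linarith [this.1]
    have hj0' : (0:ℝ) ≤ (j:ℝ) := by positivity
    have hδj : δ * j ≤ (1/4) * j := mul_le_mul_of_nonneg_right hδ14 hj0'
    linarith
  -- the eventual geometric bound
  have hmain : ∀ m : ℕ, N1 ≤ m → 8 ≤ m →
      a ^ (m - s ε m) * (1-a) ^ (s ε m) * 2 ^ m * 2 ^ (max (j0 m) (j1 m)) ≤ ρ ^ m := by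
    intro m hmN him
    set sm := s ε m with hsmdef
    have hsm : sm ≤ m := by
      rw [hsmdef, s]
      calc ∑ i ∈ Finset.range m, ε (i+1) ≤ ∑ i ∈ Finset.range m, 1 :=
        Finset.sum_le_sum (fun i _ => hε _)
      _ = m := by simp
    set J := max (j0 m) (j1 m) with hJdef
    have hJb : (J : ℝ) ≤ 8*δ*(m+1) := by
      rw [hJdef, Nat.cast_max]
      exact max_le (hj0b m (by omega)) (hj1b m (by omega))
    -- rewrite LHS as A^(m-sm) * B^sm * 2^J
    have hLHS : a ^ (m - sm) * (1-a) ^ sm * 2 ^ m * 2 ^ J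
        = A ^ (m - sm) * B ^ sm * 2 ^ J := by
      have h2m : (2:ℝ)^m = 2^(m-sm) * 2^sm := by rw [← pow_add, Nat.sub_add_cancel hsm]
      rw [hAdef, hBdef, mul_pow, mul_pow, h2m]
      ring
    rw [hLHS]
    have hf : 0 < A ^ (m - sm) * B ^ sm * 2 ^ J := by positivity
    have hρm : 0 < ρ ^ m := by positivity
    rw [← Real.log_le_log_iff hf hρm]
    have hlogf : Real.log (A ^ (m - sm) * B ^ sm * 2 ^ J)
        = ((m:ℝ) - sm) * Real.log A + (sm:ℝ) * Real.log B + (J:ℝ) * Real.log 2 := by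
      rw [Real.log_mul (by positivity) (by positivity),
        Real.log_mul (by positivity) (by positivity),
        Real.log_pow, Real.log_pow, Real.log_pow]
      rw [Nat.cast_sub hsm]
    rw [hlogf, Real.log_pow]
    have hlogq2 : Real.log q = (Real.log A + Real.log B)/2 := by
      rw [hqdef, Real.log_sqrt hABpos.le, Real.log_mul hA.ne' hB.ne']
    have hdev : |(sm:ℝ) - m/2| ≤ δ * m := hN1 m hmN
    have hterm : ((sm:ℝ) - m/2) * (Real.log B - Real.log A) ≤ δ * m * Λ := by
      calc ((sm:ℝ) - m/2) * (Real.log B - Real.log A)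
          ≤ |((sm:ℝ) - m/2) * (Real.log B - Real.log A)| := le_abs_self _
        _ = |(sm:ℝ) - m/2| * Λ := by rw [abs_mul]
        _ ≤ δ * m * Λ := mul_le_mul_of_nonneg_right hdev hΛ
    have hmR : (8:ℝ) ≤ m := by exact_mod_cast him
    have hJterm : (J:ℝ) * Real.log 2 ≤ 9 * δ * m * Real.log 2 := by
      apply mul_le_mul_of_nonneg_right _ hlog2.le
      have hge : (0:ℝ) ≤ (m:ℝ) - 8 := by linarith
      have hmm := mul_nonneg hδpos.le hge
      have hexp : δ*((m:ℝ)-8) = δ*m - 8*δ := by ring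
      linarith
    have hrearr : ((m:ℝ) - sm) * Real.log A + (sm:ℝ) * Real.log B
        = (m:ℝ) * Real.log q + ((sm:ℝ) - m/2) * (Real.log B - Real.log A) := by
      rw [hlogq2]; ring
    have hfinal : (m:ℝ) * Real.log q + δ * m * Λ + 9 * δ * m * Real.log 2
        ≤ (m:ℝ) * Real.log ρ := by
      have hmnn : (0:ℝ) ≤ m := by positivity
      have hkey : δ * (Λ + 9 * Real.log 2) ≤ Real.log ρ - Real.log q := by
        have hDexp : δ * D = δ * (Λ + 9 * Real.log 2) + δ := by rw [hDdef]; ring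
        linarith
      have hmul := mul_le_mul_of_nonneg_left hkey hmnn
      have hexp1 : (m:ℝ) * (δ * (Λ + 9 * Real.log 2)) = δ * m * Λ + 9 * δ * m * Real.log 2 := by
        ring
      have hexp2 : (m:ℝ) * (Real.log ρ - Real.log q) = m * Real.log ρ - m * Real.log q := by
        ring
      linarith
    linarith
  -- conclude
  apply squeeze_zero' (g := fun m : ℕ => ρ ^ m)
  · filter_upwards with m
    have h1a : (0:ℝ) < 1 - a := by linarith
    have := mul_pos (mul_pos (mul_pos (pow_pos ha0 (m - s ε m)) (pow_pos h1a (s ε m)))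
      (pow_pos (two_pos (α := ℝ)) m)) (pow_pos (two_pos (α := ℝ)) (max (j0 m) (j1 m)))
    exact this.le
  · filter_upwards [eventually_ge_atTop N1, eventually_ge_atTop 8] with m h1 h2
    exact hmain m h1 h2
  · exact tendsto_pow_atTop_nhds_zero_of_lt_one hρ0.le hρ1

end DZAux
open DZAux in
theorem deriv_zero_at_binary_normal
    (ε : ℕ → ℕ) (hε : ∀ n, ε n ≤ 1)
    (hinf1 : ∀ N, ∃ n ≥ N, ε n = 1) (hinf0 : ∀ N, ∃ n ≥ N, ε n = 0)
    (x : ℝ) (hx : x = ∑' n : ℕ, (ε (n+1) : ℝ) / 2 ^ (n+1))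
    (hd : Tendsto (fun n : ℕ => (∑ k ∈ Finset.range n, (ε (k+1) : ℝ)) / n)
      atTop (𝓝 (1/2))) :
    ∀ a : ℝ, 0 < a → a < 1 → a ≠ 1/2 → ∀ L : ℝ → ℝ, deRham a L →
      Tendsto (fun h : ℝ => (L (x+h) - L x) / h) (𝓝[≠] 0) (𝓝 0) := by
  classical
  intro a ha0 ha1 hane L hdR
  obtain ⟨hLc, hF0, hF1⟩ := hdR
  have hxtl : x = tl ε 0 := hx_tl ε x hx
  have hxm : ∀ m, x = ((kk ε m : ℝ) + tl ε m) / 2 ^ m := x_eq ε hε x hxtl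
  have SS := selfSimilar ε a hε L ha0 ha1 hF0 hF1
  -- bound for |L| on [0,1]
  obtain ⟨M, hM'⟩ := isCompact_Icc.exists_bound_of_continuousOn hLc
  have hM : ∀ y ∈ Set.Icc (0:ℝ) 1, |L y| ≤ M := by
    intro y hy; simpa [Real.norm_eq_abs] using hM' y hy
  have hM0 : 0 ≤ M := le_trans (abs_nonneg _) (hM 0 (by norm_num))
  -- first-zero and first-one positions
  have h0ex : ∀ m : ℕ, ∃ j, ε (m+2+j) = 0 := by
    intro m
    obtain ⟨n, hn, h⟩ := hinf0 (m+2)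
    exact ⟨n - (m+2), by rw [show m+2+(n-(m+2)) = n by omega]; exact h⟩
  have h1ex : ∀ m : ℕ, ∃ j, ε (m+2+j) = 1 := by
    intro m
    obtain ⟨n, hn, h⟩ := hinf1 (m+2)
    exact ⟨n - (m+2), by rw [show m+2+(n-(m+2)) = n by omega]; exact h⟩
  set j0 : ℕ → ℕ := fun m => Nat.find (h0ex m) with hj0def
  set j1 : ℕ → ℕ := fun m => Nat.find (h1ex m) with hj1def
  have hspec0 : ∀ m, ε (m+2+j0 m) = 0 := fun m => Nat.find_spec (h0ex m)
  have hspec1 : ∀ m, ε (m+2+j1 m) = 1 := fun m => Nat.find_spec (h1ex m)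
  have hr0 : ∀ m, ∀ i < j0 m, ε (m+2+i) = 1 := by
    intro m i hi
    have := Nat.find_min (h0ex m) hi
    have := hε (m+2+i)
    omega
  have hr1 : ∀ m, ∀ i < j1 m, ε (m+2+i) = 0 := by
    intro m i hi
    have h1 := Nat.find_min (h1ex m) hi
    have h2 := hε (m+2+i)
    omega
  -- the vanishing bound sequence
  have htend := tendsto_core ε a hε ha0 ha1 hane hd j0 j1 hr0 hr1
  have htendG : Tendsto (fun m : ℕ => 8 * M *
      (a ^ (m - s ε m) * (1-a) ^ (s ε m) * 2 ^ m * 2 ^ (max (j0 m) (j1 m))))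
      atTop (𝓝 0) := by
    simpa using htend.const_mul (8*M)
  rw [Metric.tendsto_nhdsWithin_nhds]
  intro η hη
  obtain ⟨N, hN⟩ := Metric.tendsto_atTop.mp htendG η hη
  -- interior bounds at level N
  have hWpos : ∀ m, 0 < W ε a m := by
    intro m
    apply Finset.prod_pos
    intro i _
    split <;> linarith
  have hpow : ∀ m : ℕ, (0:ℝ) < 2 ^ m := fun m => by positivity
  have hxlow : ∀ m, (kk ε m : ℝ)/2^m < x := by
    intro m
    obtain ⟨n, hn, h1⟩ := hinf1 (m+1)
    have hj : ε (m+1+(n-(m+1))) = 1 := by rw [show m+1+(n-(m+1)) = n by omega]; exact h1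
    have := tl_ge ε hε m (n-(m+1)) hj
    have htlpos : 0 < tl ε m := lt_of_lt_of_le (by positivity) this
    rw [hxm m]
    rw [lt_div_iff₀ (hpow m), div_mul_cancel₀ _ (hpow m).ne']
    linarith
  have hxhigh : ∀ m, x < (kk ε m : ℝ)/2^m + 1/2^m := by
    intro m
    obtain ⟨n, hn, h1⟩ := hinf0 (m+1)
    have hj : ε (m+1+(n-(m+1))) = 0 := by rw [show m+1+(n-(m+1)) = n by omega]; exact h1
    have := tl_le ε hε m (n-(m+1)) hj
    have htllt : tl ε m < 1 := lt_of_le_of_lt this (by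
      have : (0:ℝ) < 1/2^(n-(m+1)+1) := by positivity
      linarith)
    calc x = ((kk ε m : ℝ) + tl ε m)/2^m := hxm m
      _ < ((kk ε m : ℝ) + 1)/2^m := by
          rw [div_lt_div_iff₀ (hpow m) (hpow m)]
          nlinarith [hpow m]
      _ = (kk ε m : ℝ)/2^m + 1/2^m := add_div _ _ _
  refine ⟨min (x - (kk ε N : ℝ)/2^N) ((kk ε N : ℝ)/2^N + 1/2^N - x),
    lt_min (by linarith [hxlow N]) (by linarith [hxhigh N]), ?_⟩
  intro h hmem hdist
  have hne : h ≠ 0 := hmem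
  have habs : 0 < |h| := abs_pos.mpr hne
  rw [Real.dist_eq, sub_zero] at hdist
  -- the largest level m such that x+h stays in the level-m dyadic interval of x
  obtain ⟨B, hB'⟩ := pow_unbounded_of_one_lt (|h|⁻¹) (one_lt_two (α := ℝ))
  have hB : 1/2^B < |h| := by
    rw [one_div]
    exact inv_lt_of_inv_lt₀ habs hB'
  set P : ℕ → Prop := fun m =>
    (kk ε m : ℝ)/2^m ≤ x + h ∧ x + h ≤ (kk ε m : ℝ)/2^m + 1/2^m with hPdef
  have hPle : ∀ m, P m → |h| ≤ 1/2^m := by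
    intro m hPm
    have h1 := hxlow m
    have h2 := hxhigh m
    rw [abs_le]
    constructor <;> [linarith [hPm.1]; linarith [hPm.2]]
  have hPN : P N := by
    constructor
    · have := neg_abs_le h
      have h1 := lt_of_lt_of_le hdist (min_le_left _ _)
      linarith
    · have := le_abs_self h
      have h2 := lt_of_lt_of_le hdist (min_le_right _ _)
      linarith
  have hNB : N < B := by
    have h1 := hPle N hPN
    have h2 : (1:ℝ)/2^B < 1/2^N := lt_of_lt_of_le hB h1
    have h3 : (2:ℝ)^N < 2^B := by
      rw [div_lt_div_iff₀ (by positivity) (by positivity)] at h2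
      nlinarith
    exact (pow_lt_pow_iff_right₀ (one_lt_two (α := ℝ))).mp h3
  set m := Nat.findGreatest P B with hmdef
  have hm1 : N ≤ m := Nat.le_findGreatest hNB.le hPN
  have hPm : P m := Nat.findGreatest_spec hNB.le hPN
  have hmB : m < B := by
    rcases lt_or_eq_of_le (Nat.findGreatest_le (P := P) B) with hlt | heq
    · exact hlt
    · exfalso
      have hPB : P B := by rw [← heq]; exact hPm
      have := hPle B hPB
      linarith
  have hnP : ¬ P (m+1) := Nat.findGreatest_is_greatest (Nat.lt_succ_self m) (by omega)
  set J := max (j0 m) (j1 m) with hJdef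
  -- lower bound on |h|
  have hlow : 1/(2^(m+2) * 2^J) ≤ |h| := by
    have hpowJ : ∀ j : ℕ, j ≤ J → (1:ℝ)/(2^(m+2)*2^J) ≤ 1/(2^(m+2)*2^j) := by
      intro j hj
      apply div_le_div_of_nonneg_left one_pos.le (by positivity)
      have : (2:ℝ)^j ≤ 2^J := pow_le_pow_right₀ one_le_two hj
      nlinarith [hpow (m+2)]
    rcases not_and_or.mp hnP with hc | hc
    · push_neg at hc
      -- x + h < left endpoint at level m+1 : h is negative and large
      have hx1 := hxm (m+1)
      have htl1 : 1/2^(j1 m + 1) ≤ tl ε (m+1) := by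
        apply tl_ge ε hε (m+1) (j1 m)
        rw [show m+1+1+(j1 m) = m+2+(j1 m) by omega]
        exact hspec1 m
      have hxgap : x - (x+h) ≥ tl ε (m+1) / 2^(m+1) := by
        have hkk : (kk ε (m+1) : ℝ)/2^(m+1) ≤ x - tl ε (m+1)/2^(m+1) := by
          rw [hxm (m+1)]
          rw [div_sub_div_same, div_le_div_iff₀ (hpow (m+1)) (hpow (m+1))]
          ring_nf
          nlinarith [hpow (m+1)]
        linarith
      have e1 : tl ε (m+1) / 2^(m+1) ≥ (1/2^(j1 m + 1))/2^(m+1) := by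
        gcongr
      have e2 : (1/2^(j1 m + 1))/(2^(m+1) : ℝ) = 1/(2^(m+2) * 2^(j1 m)) := by
        rw [div_div, ← pow_add]
        congr 1
        rw [show j1 m + 1 + (m+1) = (m+2) + j1 m by omega, pow_add]
      have hj1J : j1 m ≤ J := le_max_right _ _
      have habsh : |h| = -h := abs_of_neg (by nlinarith [hxlow (m+1)])
      calc 1/(2^(m+2) * 2^J) ≤ 1/(2^(m+2) * 2^(j1 m)) := hpowJ _ hj1J
        _ = (1/2^(j1 m + 1))/(2^(m+1):ℝ) := e2.symm
        _ ≤ tl ε (m+1) / 2^(m+1) := e1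
        _ ≤ x - (x+h) := hxgap
        _ = -h := by ring
        _ = |h| := habsh.symm
    · push_neg at hc
      -- x + h > right endpoint at level m+1 : h is positive and large
      have htl1 : tl ε (m+1) ≤ 1 - 1/2^(j0 m + 1) := by
        apply tl_le ε hε (m+1) (j0 m)
        rw [show m+1+1+(j0 m) = m+2+(j0 m) by omega]
        exact hspec0 m
      have hxgap : (x+h) - x ≥ (1 - tl ε (m+1)) / 2^(m+1) := by
        have hkk : x + (1 - tl ε (m+1))/2^(m+1) ≤ (kk ε (m+1) : ℝ)/2^(m+1) + 1/2^(m+1) := by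
          rw [hxm (m+1)]
          rw [div_add_div _ _ (hpow (m+1)).ne' (hpow (m+1)).ne',
            div_add_div _ _ (hpow (m+1)).ne' (hpow (m+1)).ne']
          rw [div_le_div_iff₀ (by positivity) (by positivity)]
          ring_nf
          nlinarith [hpow (m+1)]
        linarith
      have e1 : (1 - tl ε (m+1)) / 2^(m+1) ≥ (1/2^(j0 m + 1))/2^(m+1) := by
        gcongr
        linarith
      have e2 : (1/2^(j0 m + 1))/(2^(m+1) : ℝ) = 1/(2^(m+2) * 2^(j0 m)) := by
        rw [div_div, ← pow_add]
        congr 1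
        rw [show j0 m + 1 + (m+1) = (m+2) + j0 m by omega, pow_add]
      have hj0J : j0 m ≤ J := le_max_left _ _
      have habsh : |h| = h := abs_of_pos (by nlinarith [hxhigh (m+1)])
      calc 1/(2^(m+2) * 2^J) ≤ 1/(2^(m+2) * 2^(j0 m)) := hpowJ _ hj0J
        _ = (1/2^(j0 m + 1))/(2^(m+1):ℝ) := e2.symm
        _ ≤ (1 - tl ε (m+1)) / 2^(m+1) := e1
        _ ≤ (x+h) - x := hxgap
        _ = h := by ring
        _ = |h| := habsh.symm
  -- upper bound on |L (x+h) - L x|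
  set u : ℝ := (x + h - (kk ε m : ℝ)/2^m) * 2^m with hudef
  have hu : u ∈ Set.Icc (0:ℝ) 1 := by
    constructor
    · apply mul_nonneg _ (hpow m).le
      linarith [hPm.1]
    · have : x + h - (kk ε m : ℝ)/2^m ≤ 1/2^m := by linarith [hPm.2]
      calc u ≤ (1/2^m) * 2^m := mul_le_mul_of_nonneg_right this (hpow m).le
        _ = 1 := by field_simp
  have hxh : x + h = ((kk ε m : ℝ) + u)/2^m := by
    rw [hudef]
    field_simp
    ring
  have LL : L (x+h) = L ((kk ε m : ℝ)/2^m) + W ε a m * L u := by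
    rw [hxh]; exact SS m u hu
  have Lx : L x = L ((kk ε m : ℝ)/2^m) + W ε a m * L (tl ε m) := by
    rw [hxm m]
    exact SS m (tl ε m) ⟨tl_nonneg ε m, tl_le_one ε hε m⟩
  have hdiff : |L (x+h) - L x| ≤ W ε a m * (2*M) := by
    rw [LL, Lx]
    have : L ((kk ε m : ℝ)/2^m) + W ε a m * L u -
        (L ((kk ε m : ℝ)/2^m) + W ε a m * L (tl ε m)) = W ε a m * (L u - L (tl ε m)) := by
      ring
    rw [this, abs_mul, abs_of_pos (hWpos m)]
    apply mul_le_mul_of_nonneg_left _ (hWpos m).le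
    calc |L u - L (tl ε m)| ≤ |L u| + |L (tl ε m)| := abs_sub _ _
      _ ≤ M + M := add_le_add (hM u hu) (hM _ ⟨tl_nonneg ε m, tl_le_one ε hε m⟩)
      _ = 2*M := by ring
  -- final combination
  rw [Real.dist_eq, sub_zero, abs_div]
  have hlb : (0:ℝ) < 1/(2^(m+2) * 2^J) := by positivity
  have step1 : |L (x+h) - L x| / |h| ≤ (W ε a m * (2*M)) / (1/(2^(m+2) * 2^J)) := by
    calc |L (x+h) - L x| / |h| ≤ |L (x+h) - L x| / (1/(2^(m+2) * 2^J)) :=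
          div_le_div_of_nonneg_left (abs_nonneg _) hlb hlow
      _ ≤ (W ε a m * (2*M)) / (1/(2^(m+2) * 2^J)) := by
          gcongr
  have step2 : (W ε a m * (2*M)) / (1/(2^(m+2) * 2^J))
      = 8 * M * (a ^ (m - s ε m) * (1-a) ^ (s ε m) * 2 ^ m * 2 ^ J) := by
    rw [div_div_eq_mul_div, div_one, W_eq ε a hε m,
      show (2:ℝ)^(m+2) = 2^m * 4 from by rw [pow_add]; norm_num]
    ring
  have step3 := hN m hm1
  rw [Real.dist_eq, sub_zero] at step3
  have step4 : 8 * M * (a ^ (m - s ε m) * (1-a) ^ (s ε m) * 2 ^ m * 2 ^ J) < η :=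
    lt_of_le_of_lt (le_abs_self _) step3
  calc |L (x+h) - L x| / |h| ≤ _ := step1
    _ = _ := step2
    _ < η := step4
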